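/- Let F, G be m×m real matrices with invertible P, Q such that P·F·Q = diag(I_p, H) and P·G·Q = diag(J, I_q), where H is nilpotent with H^{q*} = 0, and write Q = [Q_p Q_q], P = [P_1; P_2]. Fix V : ℕ → ℝ^m and define D_k as the vector with upper block ∑_{i=0}^{k−1} J^{k−i−1} P_1 V_i and lower block −∑_{i=0}^{q*−1} H^i P_2 V_{k+i}. If Y⁰ = Q_p·z + Q·D_0 for some z ∈ ℝ^p (the initial condition is consistent), then there is exactly one sequence Y : ℕ → ℝ^m with Y_0 = Y⁰ and F·Y_{k+1} = G·Y_k + V_k for all k ∈ ℕ, namely Y_k = Q_p·J^k·z + Q·D_k; moreover the vector z with Y⁰ = Q_p·z + Q·D_0 is unique. -/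

import Mathlib

theorem weierstrass_unique_solution
    (p q qs : ℕ)
    (F G P Q : Matrix (Fin p ⊕ Fin q) (Fin p ⊕ Fin q) ℝ)
    (hP : IsUnit P.det) (hQ : IsUnit Q.det)
    (J : Matrix (Fin p) (Fin p) ℝ) (H : Matrix (Fin q) (Fin q) ℝ)
    (hH : H ^ qs = 0)
    (hPFQ : P * F * Q = Matrix.fromBlocks 1 0 0 H)
    (hPGQ : P * G * Q = Matrix.fromBlocks J 0 0 1)
    (Qp : Matrix (Fin p ⊕ Fin q) (Fin p) ℝ) (hQp : Qp = Q.submatrix id Sum.inl)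
    (P1 : Matrix (Fin p) (Fin p ⊕ Fin q) ℝ) (hP1 : P1 = P.submatrix Sum.inl id)
    (P2 : Matrix (Fin q) (Fin p ⊕ Fin q) ℝ) (hP2 : P2 = P.submatrix Sum.inr id)
    (V : ℕ → (Fin p ⊕ Fin q) → ℝ)
    (D : ℕ → (Fin p ⊕ Fin q) → ℝ)
    (hD : ∀ k, D k = Sum.elim
      (∑ i ∈ Finset.range k, (J ^ (k - i - 1) * P1).mulVec (V i))
      (-(∑ i ∈ Finset.range qs, (H ^ i * P2).mulVec (V (k + i)))))
    (Y0 : (Fin p ⊕ Fin q) → ℝ) (z : Fin p → ℝ)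
    (hz : Y0 = Qp.mulVec z + Q.mulVec (D 0)) :
    (∃! Y : ℕ → (Fin p ⊕ Fin q) → ℝ, Y 0 = Y0 ∧
        ∀ k : ℕ, F.mulVec (Y (k + 1)) = G.mulVec (Y k) + V k) ∧
    (∀ Y : ℕ → (Fin p ⊕ Fin q) → ℝ,
        (Y 0 = Y0 ∧ ∀ k : ℕ, F.mulVec (Y (k + 1)) = G.mulVec (Y k) + V k) →
        ∀ k : ℕ, Y k = Qp.mulVec ((J ^ k).mulVec z) + Q.mulVec (D k)) ∧
    (∀ z' : Fin p → ℝ, Y0 = Qp.mulVec z' + Q.mulVec (D 0) → z' = z) := by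
  classical
  -- abbreviations for the two blocks of D
  set Du : ℕ → Fin p → ℝ :=
    fun k => ∑ i ∈ Finset.range k, (J ^ (k - i - 1) * P1).mulVec (V i) with hDu
  set Dl : ℕ → Fin q → ℝ :=
    fun k => -(∑ i ∈ Finset.range qs, (H ^ i * P2).mulVec (V (k + i))) with hDl
  have hDk : ∀ k, D k = Sum.elim (Du k) (Dl k) := fun k => hD k
  -- invertibility facts
  have hQinv : Q⁻¹ * Q = 1 := Matrix.nonsing_inv_mul Q hQ
  have hQinv' : Q * Q⁻¹ = 1 := Matrix.mul_nonsing_inv Q hQ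
  have hPinv : P⁻¹ * P = 1 := Matrix.nonsing_inv_mul P hP
  have hQinj : Function.Injective Q.mulVec := fun a b hab => by
    have h := congrArg Q⁻¹.mulVec hab
    simpa [Matrix.mulVec_mulVec, hQinv, Matrix.one_mulVec] using h
  have hPinj : Function.Injective P.mulVec := fun a b hab => by
    have h := congrArg P⁻¹.mulVec hab
    simpa [Matrix.mulVec_mulVec, hPinv, Matrix.one_mulVec] using h
  -- Sum.elim helpers
  have helim : ∀ {a c : Fin p → ℝ} {b d : Fin q → ℝ},
      Sum.elim a b = Sum.elim c d ↔ (a = c ∧ b = d) := by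
    intro a c b d
    constructor
    · intro h
      exact ⟨funext fun i => congrFun h (Sum.inl i),
        funext fun i => congrFun h (Sum.inr i)⟩
    · rintro ⟨rfl, rfl⟩; rfl
  have helimadd : ∀ (a c : Fin p → ℝ) (b d : Fin q → ℝ),
      Sum.elim a b + Sum.elim c d = Sum.elim (a + c) (b + d) := by
    intro a c b d; funext i; cases i <;> simp
  -- splitting P and Q
  have hPsplit : ∀ v, P.mulVec v = Sum.elim (P1.mulVec v) (P2.mulVec v) := by
    intro v; funext j
    cases j with
    | inl j => simp [Matrix.mulVec, hP1, Matrix.submatrix]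
    | inr j => simp [Matrix.mulVec, hP2, Matrix.submatrix]
  have hQpsplit : ∀ u, Qp.mulVec u = Q.mulVec (Sum.elim u 0) := by
    intro u; funext j
    simp [hQp, Matrix.mulVec, dotProduct, Fintype.sum_sum_type,
      Matrix.submatrix]
  -- the key block equivalence
  have key : ∀ (w w' v : (Fin p ⊕ Fin q) → ℝ),
      (F.mulVec (Q.mulVec w') = G.mulVec (Q.mulVec w) + v) ↔
      (w' ∘ Sum.inl = J.mulVec (w ∘ Sum.inl) + P1.mulVec v ∧
       H.mulVec (w' ∘ Sum.inr) = (w ∘ Sum.inr) + P2.mulVec v) := by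
    intro w w' v
    rw [← hPinj.eq_iff]
    rw [Matrix.mulVec_add, Matrix.mulVec_mulVec, Matrix.mulVec_mulVec,
      Matrix.mulVec_mulVec, Matrix.mulVec_mulVec, hPFQ, hPGQ,
      Matrix.fromBlocks_mulVec, Matrix.fromBlocks_mulVec, hPsplit v]
    simp only [Matrix.one_mulVec, Matrix.zero_mulVec, add_zero, zero_add]
    rw [helimadd, helim]
  -- sums pulled through mulVec
  have hJsum : ∀ (s : Finset ℕ) (f : ℕ → Fin p → ℝ),
      J.mulVec (∑ i ∈ s, f i) = ∑ i ∈ s, J.mulVec (f i) := by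
    intro s f
    induction s using Finset.induction with
    | empty => simp
    | insert _ _ h ih => rw [Finset.sum_insert h, Finset.sum_insert h, Matrix.mulVec_add, ih]
  have hHsum : ∀ (s : Finset ℕ) (f : ℕ → Fin q → ℝ),
      H.mulVec (∑ i ∈ s, f i) = ∑ i ∈ s, H.mulVec (f i) := by
    intro s f
    induction s using Finset.induction with
    | empty => simp
    | insert _ _ h ih => rw [Finset.sum_insert h, Finset.sum_insert h, Matrix.mulVec_add, ih]
  -- recurrence for the upper block
  have hDuRec : ∀ k, Du (k + 1) = J.mulVec (Du k) + P1.mulVec (V k) := by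
    intro k
    rw [hDu]
    simp only
    rw [Finset.sum_range_succ]
    have h1 : ∀ i ∈ Finset.range k,
        (J ^ (k + 1 - i - 1) * P1).mulVec (V i)
          = J.mulVec ((J ^ (k - i - 1) * P1).mulVec (V i)) := by
      intro i hi
      rw [Finset.mem_range] at hi
      have e1 : k + 1 - i - 1 = (k - i - 1) + 1 := by omega
      rw [e1, pow_succ', Matrix.mul_assoc, Matrix.mulVec_mulVec]
    rw [Finset.sum_congr rfl h1, ← hJsum]
    have e2 : k + 1 - k - 1 = 0 := by omega
    rw [e2, pow_zero, Matrix.one_mul]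
  -- recurrence for the lower block
  have hDlRec : ∀ k, H.mulVec (Dl (k + 1)) = Dl k + P2.mulVec (V k) := by
    intro k
    rw [hDl]
    simp only
    rw [Matrix.mulVec_neg, hHsum]
    have h1 : ∀ i ∈ Finset.range qs,
        H.mulVec ((H ^ i * P2).mulVec (V (k + 1 + i)))
          = (H ^ (i + 1) * P2).mulVec (V (k + (i + 1))) := by
      intro i _
      have e1 : k + 1 + i = k + (i + 1) := by omega
      rw [e1, Matrix.mulVec_mulVec, pow_succ', Matrix.mul_assoc]
    rw [Finset.sum_congr rfl h1]
    have h2 : ∑ i ∈ Finset.range qs, (H ^ (i+1) * P2).mulVec (V (k + (i+1)))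
        = ∑ i ∈ Finset.range qs, (H ^ i * P2).mulVec (V (k + i))
          + (H ^ qs * P2).mulVec (V (k + qs)) - (H ^ 0 * P2).mulVec (V (k + 0)) := by
      rw [← Finset.sum_range_succ]
      rw [Finset.sum_range_succ' (fun i => (H ^ i * P2).mulVec (V (k + i))) qs]
      abel
    rw [h2, hH, Matrix.zero_mul, Matrix.zero_mulVec, pow_zero, Matrix.one_mul]
    simp only [add_zero, Nat.add_zero]
    abel
  -- unique determination of the lower block
  have hylem : ∀ (y : ℕ → Fin q → ℝ),
      (∀ k, H.mulVec (y (k + 1)) = y k + P2.mulVec (V k)) → ∀ k, y k = Dl k := by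
    intro y hy
    have main : ∀ (n k : ℕ), y k = (H ^ n).mulVec (y (k + n))
        - ∑ i ∈ Finset.range n, (H ^ i * P2).mulVec (V (k + i)) := by
      intro n
      induction n with
      | zero => intro k; simp [Matrix.one_mulVec]
      | succ n ih =>
        intro k
        have h3 : y (k + n) = H.mulVec (y (k + n + 1)) - P2.mulVec (V (k + n)) := by
          rw [hy (k + n)]; abel
        have step : (H ^ n).mulVec (y (k + n))
            = (H ^ (n + 1)).mulVec (y (k + n + 1))
              - (H ^ n * P2).mulVec (V (k + n)) := by
          rw [h3, Matrix.mulVec_sub, Matrix.mulVec_mulVec, Matrix.mulVec_mulVec,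
            ← pow_succ]
        have e1 : k + (n + 1) = k + n + 1 := by omega
        rw [ih k, e1, step, Finset.sum_range_succ]
        abel
    intro k
    have := main qs k
    rw [hH, Matrix.zero_mulVec] at this
    rw [this, hDl]
    simp
  -- unique determination of the upper block
  have hxlem : ∀ (x : ℕ → Fin p → ℝ), x 0 = z →
      (∀ k, x (k + 1) = J.mulVec (x k) + P1.mulVec (V k)) →
      ∀ k, x k = (J ^ k).mulVec z + Du k := by
    intro x hx0 hx
    intro k
    induction k with
    | zero =>
      rw [hx0, hDu]
      simp [Matrix.one_mulVec]
    | succ k ih =>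
      rw [hx k, ih, hDuRec k, Matrix.mulVec_add, Matrix.mulVec_mulVec, ← pow_succ']
      abel
  -- the canonical solution
  set Ysol : ℕ → (Fin p ⊕ Fin q) → ℝ :=
    fun k => Q.mulVec (Sum.elim ((J ^ k).mulVec z + Du k) (Dl k)) with hYsol
  have hform : ∀ k, Qp.mulVec ((J ^ k).mulVec z) + Q.mulVec (D k) = Ysol k := by
    intro k
    rw [hQpsplit, ← Matrix.mulVec_add, hDk, helimadd, hYsol]
    simp only
    refine congrArg Q.mulVec ?_
    funext i; cases i <;> simp
  have hY0 : Y0 = Ysol 0 := by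
    rw [hz, ← hform 0]
    congr 2
    simp [Matrix.one_mulVec]
  have hsol : Ysol 0 = Y0 ∧
      ∀ k : ℕ, F.mulVec (Ysol (k + 1)) = G.mulVec (Ysol k) + V k := by
    refine ⟨hY0.symm, fun k => ?_⟩
    rw [hYsol]
    simp only
    rw [key]
    constructor
    · simp only [Sum.elim_comp_inl]
      rw [Matrix.mulVec_add, Matrix.mulVec_mulVec, ← pow_succ', hDuRec k]
      abel
    · simp only [Sum.elim_comp_inr]
      exact hDlRec k
  -- every solution equals the canonical one
  have huniq : ∀ Y : ℕ → (Fin p ⊕ Fin q) → ℝ,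
      (Y 0 = Y0 ∧ ∀ k : ℕ, F.mulVec (Y (k + 1)) = G.mulVec (Y k) + V k) →
      ∀ k, Y k = Ysol k := by
    rintro Y ⟨hY0', hYrec⟩
    set w : ℕ → (Fin p ⊕ Fin q) → ℝ := fun k => Q⁻¹.mulVec (Y k) with hw
    have hYw : ∀ k, Y k = Q.mulVec (w k) := by
      intro k
      rw [hw]
      simp [Matrix.mulVec_mulVec, hQinv', Matrix.one_mulVec]
    have hrec : ∀ k, (w (k + 1)) ∘ Sum.inl
          = J.mulVec ((w k) ∘ Sum.inl) + P1.mulVec (V k)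
        ∧ H.mulVec ((w (k + 1)) ∘ Sum.inr) = (w k) ∘ Sum.inr + P2.mulVec (V k) := by
      intro k
      rw [← key]
      rw [← hYw, ← hYw]
      exact hYrec k
    have hyD : ∀ k, (w k) ∘ Sum.inr = Dl k :=
      hylem (fun k => (w k) ∘ Sum.inr) (fun k => (hrec k).2)
    have hw0 : w 0 = Sum.elim (z + Du 0) (Dl 0) := by
      apply hQinj
      rw [← hYw 0, hY0', hz, hQpsplit, ← Matrix.mulVec_add, hDk, helimadd, zero_add]
    have hx0 : (w 0) ∘ Sum.inl = z := by
      rw [hw0]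
      simp only [Sum.elim_comp_inl]
      rw [hDu]
      simp
    have hxD : ∀ k, (w k) ∘ Sum.inl = (J ^ k).mulVec z + Du k :=
      hxlem (fun k => (w k) ∘ Sum.inl) hx0 (fun k => (hrec k).1)
    intro k
    rw [hYw k, hYsol]
    simp only
    rw [← Sum.elim_comp_inl_inr (w k), hxD k, hyD k]
  refine ⟨⟨Ysol, hsol, fun Y hY => funext fun k => huniq Y hY k⟩, ?_, ?_⟩
  · intro Y hY k
    rw [huniq Y hY k, hform k]
  · intro z' hz'
    have h1 : Qp.mulVec z' = Qp.mulVec z := by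
      have := hz'.symm.trans hz
      exact add_right_cancel this
    rw [hQpsplit, hQpsplit] at h1
    have h2 := hQinj h1
    exact (helim.mp h2).1
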